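/- For every ε > 0 there exists a constant C_ε > 0, depending only on ε, with the following property: for every positive integer r, every r-even function f : ℕ+ → ℂ, every real K with |f(n)| ≤ K for all positive integers n, and every real x ≥ 1, one has |Σ_{n ≤ x} f(n) − M x| ≤ K · C_ε · r^{1+ε}, where M = (1/r) Σ_{e | r} f(e) φ(r/e). -/

import Mathlib

open Finset Filter Topology

-- fiber count
private lemma card_fiber (r e : ℕ) (hr : 0 < r) (he : e ∈ r.divisors) :
    ({n ∈ Finset.Ioc 0 r | Nat.gcd n r = e}).card = Nat.totient (r / e) := by
  have hed : e ∣ r := (Nat.mem_divisors.mp he).1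
  have he0 : 0 < e := Nat.pos_of_mem_divisors he
  have hre : 0 < r / e := Nat.div_pos (Nat.le_of_dvd hr hed) he0
  have hcount : Nat.totient (r / e)
      = ({m ∈ Finset.Ioc 0 (r / e) | Nat.gcd m (r / e) = 1}).card := by
    rw [← Nat.filter_coprime_Ico_eq_totient (r / e) 1]
    congr 1
    ext m
    simp only [Finset.mem_filter, Finset.mem_Ico, Finset.mem_Ioc, Nat.Coprime]
    constructor
    · rintro ⟨⟨h1, h2⟩, h3⟩
      exact ⟨⟨h1, by omega⟩, by rwa [Nat.gcd_comm]⟩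
    · rintro ⟨⟨h1, h2⟩, h3⟩
      exact ⟨⟨h1, by omega⟩, by rwa [Nat.gcd_comm]⟩
  rw [hcount]
  apply Finset.card_nbij' (fun n => n / e) (fun m => e * m)
  · intro n hn
    simp only [Finset.mem_coe, Finset.mem_filter, Finset.mem_Ioc] at hn ⊢
    obtain ⟨⟨hn0, hnr⟩, hg⟩ := hn
    refine ⟨⟨?_, ?_⟩, ?_⟩
    · exact Nat.div_pos (Nat.le_of_dvd hn0 (hg ▸ Nat.gcd_dvd_left n r)) he0
    · exact Nat.div_le_div_right hnr
    · have := Nat.coprime_div_gcd_div_gcd (m := n) (n := r) (by rw [hg]; exact he0)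
      rwa [hg] at this
  · intro m hm
    simp only [Finset.mem_coe, Finset.mem_filter, Finset.mem_Ioc] at hm ⊢
    obtain ⟨⟨hm0, hmr⟩, hg⟩ := hm
    refine ⟨⟨by positivity, ?_⟩, ?_⟩
    · calc e * m ≤ e * (r / e) := Nat.mul_le_mul_left e hmr
        _ = r := Nat.mul_div_cancel' hed
    · have : Nat.gcd (e * m) (e * (r / e)) = e * Nat.gcd m (r / e) := Nat.gcd_mul_left e m (r / e)
      rw [Nat.mul_div_cancel' hed] at this
      rw [this, hg, mul_one]
  · intro n hn
    simp only [Finset.mem_coe, Finset.mem_filter, Finset.mem_Ioc] at hn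
    exact Nat.mul_div_cancel' (hn.2 ▸ Nat.gcd_dvd_left n r)
  · intro m hm
    exact Nat.mul_div_cancel_left m he0

private lemma shift_sum (f : ℕ → ℂ) (a b : ℕ) :
    ∑ n ∈ Finset.Ioc a (a + b), f n = ∑ n ∈ Finset.Ioc 0 b, f (a + n) := by
  have h : Finset.Ioc a (a + b) = (Finset.Ioc 0 b).map (addLeftEmbedding a) := by
    rw [Finset.map_add_left_Ioc]; simp
  rw [h, Finset.sum_map]
  simp [addLeftEmbedding]

theorem even_partial_sum_error (ε : ℝ) (hε : 0 < ε) :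
    ∃ C : ℝ, 0 < C ∧ ∀ r : ℕ, 0 < r → ∀ f : ℕ → ℂ,
      (∀ n : ℕ, 0 < n → f n = f (Nat.gcd n r)) →
      ∀ K : ℝ, (∀ n : ℕ, 0 < n → ‖f n‖ ≤ K) →
      ∀ x : ℝ, 1 ≤ x →
        ‖(∑ n ∈ Finset.Icc 1 ⌊x⌋₊, f n) -
            ((1 / (r : ℂ)) * ∑ e ∈ r.divisors, f e * (Nat.totient (r / e) : ℂ)) * (x : ℂ)‖
          ≤ K * C * (r : ℝ) ^ (1 + ε) := by
  refine ⟨2, by norm_num, ?_⟩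
  intro r hr f hf K hK x hx
  have hK0 : 0 ≤ K := le_trans (norm_nonneg _) (hK 1 one_pos)
  have hr0 : (r : ℂ) ≠ 0 := Nat.cast_ne_zero.mpr hr.ne'
  set D : ℂ := ∑ e ∈ r.divisors, f e * (Nat.totient (r / e) : ℂ) with hD
  set M : ℂ := (1 / (r : ℂ)) * D with hM
  -- sum over a full period
  have hperiod_sum : ∑ n ∈ Finset.Ioc 0 r, f n = D := by
    have h1 : ∑ n ∈ Finset.Ioc 0 r, f n = ∑ n ∈ Finset.Ioc 0 r, f (Nat.gcd n r) := by
      apply Finset.sum_congr rfl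
      intro n hn
      exact hf n (Finset.mem_Ioc.mp hn).1
    rw [h1, hD]
    rw [← Finset.sum_fiberwise_of_maps_to (g := fun n => Nat.gcd n r) (t := r.divisors) ?maps]
    case maps =>
      intro n hn
      rw [Nat.mem_divisors]
      exact ⟨Nat.gcd_dvd_right n r, hr.ne'⟩
    apply Finset.sum_congr rfl
    intro e he
    have : ∑ n ∈ {n ∈ Finset.Ioc 0 r | Nat.gcd n r = e}, f (Nat.gcd n r)
        = ∑ n ∈ {n ∈ Finset.Ioc 0 r | Nat.gcd n r = e}, f e := by
      apply Finset.sum_congr rfl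
      intro n hn
      rw [(Finset.mem_filter.mp hn).2]
    rw [this, Finset.sum_const, card_fiber r e hr he, nsmul_eq_mul, mul_comm]
  -- periodicity of f under adding multiples of r
  have hper : ∀ k n : ℕ, 0 < n → f (k * r + n) = f n := by
    intro k
    induction k with
    | zero => simp
    | succ k ih =>
      intro n hn
      have h1 : (k + 1) * r + n = k * r + (r + n) := by ring
      rw [h1, ih (r + n) (by omega)]
      rw [hf (r + n) (by omega), hf n hn]
      congr 1
      simp [Nat.gcd_add_self_left]
  -- sum over q full periods
  have hfull : ∀ q : ℕ, ∑ n ∈ Finset.Ioc 0 (q * r), f n = (q : ℂ) * D := by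
    intro q
    induction q with
    | zero => simp
    | succ q ih =>
      have hsplit : ∑ n ∈ Finset.Ioc 0 (q * r), f n + ∑ n ∈ Finset.Ioc (q * r) ((q+1) * r), f n
          = ∑ n ∈ Finset.Ioc 0 ((q+1) * r), f n :=
        Finset.sum_Ioc_consecutive f (Nat.zero_le _) (by nlinarith)
      have h2 : ∑ n ∈ Finset.Ioc (q * r) ((q+1) * r), f n = D := by
        have : (q+1) * r = q * r + r := by ring
        rw [this, shift_sum]
        rw [← hperiod_sum]
        apply Finset.sum_congr rfl
        intro n hn
        exact hper q n (Finset.mem_Ioc.mp hn).1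
      rw [← hsplit, ih, h2]
      push_cast
      ring
  -- decompose N = ⌊x⌋₊
  set N := ⌊x⌋₊ with hN
  set q := N / r with hq
  set s := N % r with hs
  have hNqs : N = q * r + s := by rw [hq, hs, Nat.mul_comm]; exact (Nat.div_add_mod N r).symm
  have hslt : s < r := Nat.mod_lt N hr
  have hSN : ∑ n ∈ Finset.Icc 1 N, f n
      = (q : ℂ) * D + ∑ n ∈ Finset.Ioc 0 s, f (q * r + n) := by
    rw [show Finset.Icc 1 N = Finset.Ioc 0 N from (Finset.Icc_add_one_left_eq_Ioc 0 N).symm ▸ rfl]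
    rw [hNqs, ← Finset.sum_Ioc_consecutive f (Nat.zero_le (q*r)) (Nat.le_add_right _ _),
      hfull, shift_sum]
  have hT : ∑ n ∈ Finset.Ioc 0 s, f (q * r + n) = ∑ n ∈ Finset.Ioc 0 s, f n := by
    apply Finset.sum_congr rfl
    intro n hn
    exact hper q n (Finset.mem_Ioc.mp hn).1
  rw [hSN, hT]
  set T : ℂ := ∑ n ∈ Finset.Ioc 0 s, f n with hTdef
  -- key algebraic rewrite
  have hMD : M * (r : ℂ) = D := by
    rw [hM]; field_simp
  have halg : (q : ℂ) * D + T - M * (x : ℂ) = T - M * ((x : ℂ) - (q : ℂ) * (r : ℂ)) := by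
    rw [← hMD]; ring
  rw [halg]
  -- bounds
  have hDb : ‖D‖ ≤ K * r := by
    rw [← hperiod_sum]
    calc ‖∑ n ∈ Finset.Ioc 0 r, f n‖
        ≤ ∑ n ∈ Finset.Ioc 0 r, ‖f n‖ := by
          exact norm_sum_le _ _
      _ ≤ ∑ n ∈ Finset.Ioc 0 r, K := by
          apply Finset.sum_le_sum
          intro n hn
          exact hK n (Finset.mem_Ioc.mp hn).1
      _ = K * r := by simp [Nat.card_Ioc, mul_comm]
  have hMb : ‖M‖ ≤ K := by
    have h := hDb
    rw [← hMD, norm_mul, Complex.norm_natCast] at h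
    exact le_of_mul_le_mul_right h (Nat.cast_pos.mpr hr)
  have hTb : ‖T‖ ≤ K * r := by
    calc ‖T‖ ≤ ∑ n ∈ Finset.Ioc 0 s, ‖f n‖ :=
        norm_sum_le _ _
      _ ≤ ∑ n ∈ Finset.Ioc 0 s, K := by
          apply Finset.sum_le_sum
          intro n hn
          exact hK n (Finset.mem_Ioc.mp hn).1
      _ = K * s := by simp [Nat.card_Ioc, mul_comm]
      _ ≤ K * r := by
          apply mul_le_mul_of_nonneg_left _ hK0
          exact_mod_cast hslt.le
  have hxq : (0:ℝ) ≤ x - (q : ℝ) * r ∧ x - (q : ℝ) * r ≤ r := by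
    have h1 : (q * r : ℕ) ≤ N := by omega
    have h2 : (N : ℝ) ≤ x := Nat.floor_le (by linarith)
    have h3 : x < N + 1 := Nat.lt_floor_add_one x
    have h4 : ((q * r : ℕ) : ℝ) = (q:ℝ) * r := by push_cast; ring
    have h5 : ((q*r : ℕ) : ℝ) ≤ (N:ℝ) := by exact_mod_cast h1
    constructor
    · linarith [h4 ▸ h5]
    · have : (N : ℝ) = (q:ℝ)*r + s := by exact_mod_cast hNqs
      have hs' : (s:ℝ) ≤ (r:ℝ) - 1 := by
        have : s + 1 ≤ r := hslt
        have := (Nat.cast_le (α := ℝ)).mpr this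
        push_cast at this
        linarith
      linarith
  have habs2 : ‖M * ((x : ℂ) - (q : ℂ) * (r : ℂ))‖ ≤ K * r := by
    rw [norm_mul]
    have : ‖(x : ℂ) - (q : ℂ) * (r : ℂ)‖ = |x - (q:ℝ) * r| := by
      rw [show (x : ℂ) - (q : ℂ) * (r : ℂ) = ((x - (q:ℝ)*r : ℝ) : ℂ) by push_cast; ring,
        Complex.norm_real, Real.norm_eq_abs]
    rw [this, abs_of_nonneg hxq.1]
    exact mul_le_mul hMb hxq.2 hxq.1 hK0
  have hmain : ‖T - M * ((x : ℂ) - (q : ℂ) * (r : ℂ))‖ ≤ 2 * (K * r) := by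
    calc ‖T - M * ((x : ℂ) - (q : ℂ) * (r : ℂ))‖
        ≤ ‖T‖ + ‖M * ((x : ℂ) - (q : ℂ) * (r : ℂ))‖ := by
          exact norm_sub_le _ _
      _ ≤ K * r + K * r := add_le_add hTb habs2
      _ = 2 * (K * r) := by ring
  refine hmain.trans ?_
  have hrpow : (r : ℝ) ≤ (r : ℝ) ^ (1 + ε) := by
    calc (r:ℝ) = (r:ℝ) ^ (1:ℝ) := (Real.rpow_one _).symm
      _ ≤ (r:ℝ) ^ (1 + ε) := Real.rpow_le_rpow_of_exponent_le
          (by exact_mod_cast hr) (by linarith)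
  calc 2 * (K * r) = K * 2 * r := by ring
    _ ≤ K * 2 * (r:ℝ) ^ (1+ε) := by
        apply mul_le_mul_of_nonneg_left hrpow (by linarith)
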